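/- Define f_n(x) = ∑_{k=1}^{n} |sin(kπx)|/k. For coprime p, q with q ≥ 1 and n ≥ q², there exist δ > 0 and a constant c > 0 such that for all |ε| < δ, f_n(p/q + ε) - f_n(p/q) ≥ c|ε| + O(ε²); in particular f_n(p/q + ε) - f_n(p/q) ≥ (c/2)|ε| for all sufficiently small ε. -/

import Mathlib

open Real Finset

/-! Auxiliary elementary bounds -/

lemma aux_sin_sub_sq {t : ℝ} (ht : |t| ≤ 1) : |Real.sin t - t| ≤ t ^ 2 := by
  rcases le_or_gt 0 t with h | h
  · rw [abs_of_nonpos (by linarith [Real.sin_le h])]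
    rcases eq_or_lt_of_le h with rfl | h0
    · simp
    · have h1 : t ≤ 1 := by rwa [abs_of_nonneg h] at ht
      have := Real.sin_gt_sub_cube h0
      nlinarith
  · have ht' : |(-t)| ≤ 1 := by rwa [abs_neg]
    have h0 : (0:ℝ) < -t := by linarith
    have h1 : -t ≤ 1 := by rwa [abs_of_nonneg h0.le] at ht'
    have h2 := Real.sin_gt_sub_cube h0
    have h3 := Real.sin_le h0.le
    rw [Real.sin_neg] at h2 h3
    rw [abs_of_nonneg (by linarith)]
    nlinarith

lemma aux_abs_sin_ge {t : ℝ} (ht : |t| ≤ 1) : |Real.sin t| ≥ |t| - t ^ 2 := by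
  have h := aux_sin_sub_sq ht
  have h2 := abs_sub_abs_le_abs_sub t (Real.sin t)
  rw [abs_sub_comm] at h2
  linarith

lemma aux_key_pointwise {θ s : ℝ} (h0 : 0 ≤ Real.sin θ) (hs : |s| ≤ 1) :
    |Real.sin (θ + s)| - Real.sin θ ≥ Real.cos θ * s - 2 * s ^ 2 := by
  have h1 : Real.sin (θ + s) = Real.sin θ * Real.cos s + Real.cos θ * Real.sin s :=
    Real.sin_add θ s
  have h2 : Real.sin (θ + s) ≤ |Real.sin (θ + s)| := le_abs_self _
  have h3 : Real.sin θ * (Real.cos s - 1) ≥ -(s^2/2) := by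
    have hc : 1 - s^2/2 ≤ Real.cos s := Real.one_sub_sq_div_two_le_cos
    have hc1 : Real.cos s ≤ 1 := Real.cos_le_one s
    have hs1 : Real.sin θ ≤ 1 := Real.sin_le_one θ
    nlinarith
  have h4 : Real.cos θ * (Real.sin s - s) ≥ -(s^2) := by
    have := aux_sin_sub_sq hs
    have hc : |Real.cos θ| ≤ 1 := Real.abs_cos_le_one θ
    have h5 : |Real.cos θ * (Real.sin s - s)| ≤ s^2 := by
      rw [abs_mul]; nlinarith [abs_nonneg (Real.sin s - s)]
    linarith [neg_abs_le (Real.cos θ * (Real.sin s - s))]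
  nlinarith

lemma aux_abs_neg_one_zpow (t : ℤ) : |(-1 : ℝ) ^ t| = 1 := by
  rcases Int.even_or_odd t with h | h
  · rw [h.neg_one_zpow]; simp
  · rw [h.neg_one_zpow]; simp

/-! ZMod combinatorics -/

lemma aux_isUnit_p (p : ℤ) (q : ℕ) [NeZero q] (hpq : Int.gcd p q = 1) :
    IsUnit ((p : ZMod q)) := by
  have hcop : IsCoprime p (q : ℤ) := Int.isCoprime_iff_gcd_eq_one.mpr hpq
  have h2 := hcop.map (Int.castRingHom (ZMod q))
  have h3 : ((Int.castRingHom (ZMod q)) ((q:ℤ))) = 0 := by simp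
  rw [h3] at h2
  simpa using isCoprime_zero_right.mp h2

lemma aux_sum_range_zmod (q : ℕ) [NeZero q] (g : ZMod q → ℝ) :
    ∑ j ∈ range q, g (j : ZMod q) = ∑ x : ZMod q, g x := by
  refine Finset.sum_nbij' (fun j => (j : ZMod q)) (fun x => x.val) ?_ ?_ ?_ ?_ ?_
  · intro a _; exact Finset.mem_univ _
  · intro x _; exact Finset.mem_range.mpr (ZMod.val_lt x)
  · intro a ha; exact ZMod.val_cast_of_lt (Finset.mem_range.mp ha)
  · intro x _; exact ZMod.natCast_rightInverse x
  · intro a _; rfl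

lemma aux_sum_range_mul_zmod (q : ℕ) [NeZero q] (g : ZMod q → ℝ) (m : ℕ) :
    ∑ j ∈ range (q * m), g (j : ZMod q) = m * ∑ x : ZMod q, g x := by
  induction m with
  | zero => simp
  | succ m ih =>
    have h : q * (m + 1) = q * m + q := by ring
    rw [h, Finset.sum_range_add, ih]
    have h2 : ∀ i ∈ range q, g ((q * m + i : ℕ) : ZMod q) = g ((i : ℕ) : ZMod q) := by
      intro i _
      congr 1
      push_cast
      simp [ZMod.natCast_self]
    rw [Finset.sum_congr rfl h2, aux_sum_range_zmod]
    push_cast; ring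

lemma aux_periodic_sum_bound (q n : ℕ) [NeZero q] (g : ZMod q → ℝ)
    (hg : ∑ x : ZMod q, g x = 0) (hb : ∀ x, |g x| ≤ 1) :
    |∑ k ∈ Icc 1 n, g (k : ZMod q)| ≤ (q : ℝ) - 1 := by
  have h1 : ∑ k ∈ Icc 1 n, g (k : ZMod q) = ∑ j ∈ range n, g ((1 + j : ℕ) : ZMod q) := by
    rw [show Icc 1 n = Ico 1 (n+1) by rfl, Finset.sum_Ico_eq_sum_range]
    simp
  set g' : ZMod q → ℝ := fun x => g (1 + x) with hg'
  have hgg' : ∀ j : ℕ, g ((1 + j : ℕ) : ZMod q) = g' ((j : ℕ) : ZMod q) := by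
    intro j; simp only [hg']; congr 1; push_cast; ring
  have hg'sum : ∑ x : ZMod q, g' x = 0 := by
    rw [← hg]
    exact Fintype.sum_equiv (Equiv.addLeft (1 : ZMod q)) _ _ (fun x => rfl)
  have hsplit : n = q * (n / q) + n % q := (Nat.div_add_mod n q).symm
  rw [h1, Finset.sum_congr rfl (fun j _ => hgg' j), hsplit, Finset.sum_range_add,
    aux_sum_range_mul_zmod q g' (n / q), hg'sum]
  rw [mul_zero, zero_add]
  calc |∑ i ∈ range (n % q), g' ((q * (n / q) + i : ℕ) : ZMod q)|
      ≤ ∑ i ∈ range (n % q), |g' ((q * (n / q) + i : ℕ) : ZMod q)| :=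
        Finset.abs_sum_le_sum_abs _ _
    _ ≤ ∑ _i ∈ range (n % q), (1:ℝ) := Finset.sum_le_sum (fun i _ => hb _)
    _ = (n % q : ℕ) := by simp
    _ ≤ (q : ℝ) - 1 := by
        have h2 : n % q < q := Nat.mod_lt _ (Nat.pos_of_ne_zero (NeZero.ne q))
        have h4 : (n % q : ℕ) ≤ q - 1 := Nat.le_sub_one_of_lt h2
        have h3 : ((n % q : ℕ) : ℝ) ≤ ((q - 1 : ℕ) : ℝ) := Nat.cast_le.mpr h4
        rw [Nat.cast_sub (Nat.one_le_iff_ne_zero.mpr (NeZero.ne q))] at h3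
        simpa using h3

lemma aux_sum_H (q : ℕ) [NeZero q] :
    ∑ y : ZMod q, (if y = 0 then (0:ℝ) else Real.cos (π * y.val / q)) = 0 := by
  set H : ZMod q → ℝ := fun y => if y = 0 then (0:ℝ) else Real.cos (π * y.val / q) with hH
  have hneg : ∀ y : ZMod q, H y + H (-y) = 0 := by
    intro y
    by_cases hy : y = 0
    · simp [hH, hy]
    · have hy' : -y ≠ 0 := by simpa using hy
      have hval : (-y).val = q - y.val := by
        rw [ZMod.neg_val]; simp [hy]
      have hvlt : y.val < q := ZMod.val_lt y
      have hq0 : (q : ℝ) ≠ 0 := Nat.cast_ne_zero.mpr (NeZero.ne q)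
      have harg : π * ((-y).val : ℝ) / q = π - π * y.val / q := by
        rw [hval]
        have hc : ((q - y.val : ℕ) : ℝ) = (q : ℝ) - y.val := by
          push_cast [Nat.cast_sub hvlt.le]; ring
        rw [hc]; field_simp
      simp only [hH, if_neg hy, if_neg hy', harg, Real.cos_pi_sub]
      ring
  have hre : ∑ y : ZMod q, H (-y) = ∑ y : ZMod q, H y :=
    Fintype.sum_equiv (Equiv.neg (ZMod q)) _ _ (fun y => rfl)
  have h2 : (2:ℝ) * ∑ y : ZMod q, H y = 0 := by
    calc (2:ℝ) * ∑ y : ZMod q, H y = ∑ y : ZMod q, (H y + H (-y)) := by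
          rw [Finset.sum_add_distrib, hre]; ring
      _ = 0 := by simp [hneg]
  linarith

lemma aux_sum_g (p : ℤ) (q : ℕ) [NeZero q] (hpq : Int.gcd p q = 1) :
    ∑ x : ZMod q, (if x = 0 then (0:ℝ) else Real.cos (π * ((x * p).val : ℝ) / q)) = 0 := by
  obtain ⟨u, hu⟩ := aux_isUnit_p p q hpq
  set H : ZMod q → ℝ := fun y => if y = 0 then (0:ℝ) else Real.cos (π * y.val / q) with hH
  have hgx : ∀ x : ZMod q, (if x = 0 then (0:ℝ) else Real.cos (π * ((x * p).val : ℝ) / q))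
      = H (x * p) := by
    intro x
    by_cases hx : x = 0
    · simp [hH, hx]
    · have hxp : x * (p : ZMod q) ≠ 0 := by
        rw [← hu, Ne, Units.mul_left_eq_zero]; exact hx
      simp [hH, hx, hxp]
  rw [Finset.sum_congr rfl (fun x _ => hgx x)]
  have h : ∑ x : ZMod q, H (x * p) = ∑ y : ZMod q, H y := by
    rw [← hu]
    exact Fintype.sum_equiv (Units.mulRight u) _ _ (fun x => rfl)
  rw [h]
  exact aux_sum_H q

/-! Per-term bound -/

lemma aux_term_bound (p : ℤ) (q : ℕ) [NeZero q] (hpq : Int.gcd p q = 1) (k : ℕ) (hk : 1 ≤ k)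
    (ε : ℝ) (hs : |(k:ℝ) * π * ε| ≤ 1) :
    |Real.sin ((k:ℝ) * π * ((p:ℝ)/q + ε))| / k - |Real.sin ((k:ℝ) * π * ((p:ℝ)/q))| / k ≥
      (if q ∣ k then π * |ε|
        else π * ε * (if ((k : ZMod q)) = 0 then (0:ℝ)
          else Real.cos (π * ((((k : ZMod q)) * (p : ZMod q)).val : ℝ) / q)))
      - 2 * π ^ 2 * k * ε ^ 2 := by
  have hq0 : (q:ℝ) ≠ 0 := Nat.cast_ne_zero.mpr (NeZero.ne q)
  have hk0 : (0:ℝ) < k := by exact_mod_cast hk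
  have hπ := Real.pi_pos
  by_cases hdvd : q ∣ k
  · rw [if_pos hdvd]
    obtain ⟨m, rfl⟩ := hdvd
    have e1 : ((q*m : ℕ):ℝ) * π * ((p:ℝ)/q) = ((m*p : ℤ):ℝ) * π := by
      push_cast; field_simp
    have e2 : ((q*m : ℕ):ℝ) * π * ((p:ℝ)/q + ε) = ((q*m : ℕ):ℝ) * π * ε + ((m*p : ℤ):ℝ) * π := by
      push_cast; field_simp; ring
    rw [e1, e2, Real.sin_int_mul_pi, Real.sin_add_int_mul_pi, abs_zero, zero_div, sub_zero,
      abs_mul, aux_abs_neg_one_zpow, one_mul]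
    set s := ((q*m : ℕ):ℝ) * π * ε with hsdef
    have h1 : |Real.sin s| ≥ |s| - s ^ 2 := aux_abs_sin_ge hs
    have h2 : |s| = (↑(q*m) : ℝ) * π * |ε| := by
      rw [hsdef, abs_mul, abs_of_nonneg (by positivity : (0:ℝ) ≤ ((q*m:ℕ):ℝ) * π)]
    rw [ge_iff_le, le_div_iff₀ hk0]
    have h3 : s ^ 2 = ((q*m:ℕ):ℝ)^2 * π^2 * ε^2 := by rw [hsdef]; ring
    nlinarith [sq_nonneg ε, sq_nonneg ((q*m:ℕ):ℝ), mul_pos hπ hk0]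
  · rw [if_neg hdvd]
    have hkz : ((k : ZMod q)) ≠ 0 := by
      rwa [Ne, ZMod.natCast_eq_zero_iff]
    rw [if_neg hkz]
    have hrne : (((k : ZMod q)) * (p : ZMod q)) ≠ 0 := by
      obtain ⟨u, hu⟩ := aux_isUnit_p p q hpq
      rw [← hu, Ne, Units.mul_left_eq_zero]; exact hkz
    set r : ℕ := (((k : ZMod q)) * (p : ZMod q)).val with hrdef
    have hr0 : 0 < r := ZMod.val_pos.mpr hrne
    have hrq : r < q := ZMod.val_lt _
    have hrem : (r : ℤ) = ((k:ℤ) * p) % q := by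
      have h : ((k : ZMod q) * (p : ZMod q)) = (((k:ℤ) * p : ℤ) : ZMod q) := by push_cast; ring
      rw [hrdef, h, ZMod.val_intCast]
    set t : ℤ := ((k:ℤ) * p) / q with htdef
    have hqt : (k:ℤ) * p = q * t + r := by
      have := Int.mul_ediv_add_emod ((k:ℤ)*p) q
      rw [hrem, htdef]; omega
    set θ : ℝ := π * (r:ℝ) / q with hθdef
    have hθ0 : 0 < θ := by
      apply div_pos (mul_pos hπ (by exact_mod_cast hr0)) (by positivity)
    have hθπ : θ < π := by
      rw [hθdef, div_lt_iff₀ (by positivity : (0:ℝ) < q)]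
      have : (r:ℝ) < q := by exact_mod_cast hrq
      nlinarith
    have hsinθ : 0 < Real.sin θ := Real.sin_pos_of_pos_of_lt_pi hθ0 hθπ
    have hcast : (k:ℝ) * (p:ℝ) = (q:ℝ) * (t:ℝ) + (r:ℝ) := by exact_mod_cast hqt
    have e1 : (k:ℝ) * π * ((p:ℝ)/q) = θ + (t:ℝ) * π := by
      rw [hθdef]; field_simp; linear_combination hcast
    have e2 : (k:ℝ) * π * ((p:ℝ)/q + ε) = (θ + (k:ℝ) * π * ε) + (t:ℝ) * π := by
      rw [mul_add, e1]; ring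
    rw [e1, e2, Real.sin_add_int_mul_pi, Real.sin_add_int_mul_pi, abs_mul, abs_mul,
      aux_abs_neg_one_zpow, one_mul, one_mul, abs_of_pos hsinθ]
    set s := (k:ℝ) * π * ε with hsdef
    have hkey : |Real.sin (θ + s)| - Real.sin θ ≥ Real.cos θ * s - 2 * s ^ 2 :=
      aux_key_pointwise hsinθ.le hs
    rw [ge_iff_le, div_sub_div_same, le_div_iff₀ hk0]
    have h4 : (π * ε * Real.cos θ - 2 * π ^ 2 * (k:ℝ) * ε ^ 2) * k
        = Real.cos θ * s - 2 * s ^ 2 := by rw [hsdef]; ring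
    linarith

noncomputable def f (n : ℕ) (x : ℝ) : ℝ :=
  ∑ k ∈ Finset.Icc 1 n, |Real.sin (k * Real.pi * x)| / k

/-! Main estimate -/

lemma aux_main_est (p : ℤ) (q : ℕ) (hq : 1 ≤ q) (hpq : Int.gcd p q = 1)
    (n : ℕ) (hn : q ^ 2 ≤ n) (ε : ℝ) (hε : (n:ℝ) * π * |ε| ≤ 1) :
    f n ((p : ℝ) / q + ε) - f n ((p : ℝ) / q)
      ≥ π * |ε| - (2 * π ^ 2 * (n:ℝ) ^ 2) * ε ^ 2 := by
  haveI : NeZero q := ⟨by omega⟩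
  have hπ := Real.pi_pos
  classical
  set G : ZMod q → ℝ := fun x => if x = 0 then (0:ℝ)
      else Real.cos (π * ((x * p).val : ℝ) / q) with hGdef
  have hterm : ∀ k ∈ Icc 1 n,
      (if q ∣ k then π * |ε| else π * ε * G (k : ZMod q)) - 2 * π ^ 2 * (k:ℝ) * ε ^ 2
      ≤ |Real.sin ((k:ℝ) * π * ((p:ℝ)/q + ε))| / k
        - |Real.sin ((k:ℝ) * π * ((p:ℝ)/q))| / k := by
    intro k hk
    obtain ⟨hk1, hk2⟩ := Finset.mem_Icc.mp hk
    have habs : |(k:ℝ) * π * ε| ≤ 1 := by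
      have h : |(k:ℝ)*π*ε| = (k:ℝ)*π*|ε| := by
        rw [abs_mul, abs_of_nonneg (by positivity)]
      rw [h]
      have hkn : (k:ℝ) ≤ n := by exact_mod_cast hk2
      nlinarith [mul_nonneg (mul_nonneg (sub_nonneg.mpr hkn) hπ.le) (abs_nonneg ε)]
    exact aux_term_bound p q hpq k hk1 ε habs
  have hsum : f n ((p:ℝ)/q + ε) - f n ((p:ℝ)/q)
      = ∑ k ∈ Icc 1 n, (|Real.sin ((k:ℝ) * π * ((p:ℝ)/q + ε))| / k
        - |Real.sin ((k:ℝ) * π * ((p:ℝ)/q))| / k) := by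
    rw [f, f, ← Finset.sum_sub_distrib]
  rw [ge_iff_le, hsum]
  refine le_trans ?_ (Finset.sum_le_sum hterm)
  -- now a purely combinatorial estimate
  rw [Finset.sum_sub_distrib]
  have hcard : ((Icc 1 n).filter (fun k => q ∣ k)).card = n / q := by
    have h : Icc 1 n = Ioc 0 n := by rw [← Finset.Icc_add_one_left_eq_Ioc, zero_add]
    rw [h]
    exact Nat.Ioc_filter_dvd_card_eq_div n q
  have hMq : q ≤ n / q := by
    rw [Nat.le_div_iff_mul_le (by omega : 0 < q)]
    nlinarith [hn]
  have hMqR : (q:ℝ) ≤ ((n / q : ℕ) : ℝ) := by exact_mod_cast hMq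
  have hq1R : (1:ℝ) ≤ q := by exact_mod_cast hq
  -- split the if-sum
  have hsplit : ∑ k ∈ Icc 1 n, (if q ∣ k then π * |ε| else π * ε * G (k : ZMod q))
      = (↑(n / q) : ℝ) * (π * |ε|)
        + π * ε * ∑ k ∈ (Icc 1 n).filter (fun k => ¬ q ∣ k), G (k : ZMod q) := by
    rw [Finset.sum_ite, Finset.sum_const, hcard, Finset.mul_sum]
    simp [nsmul_eq_mul]
  -- the W bound
  have hWfull : ∑ k ∈ (Icc 1 n).filter (fun k => ¬ q ∣ k), G (k : ZMod q)
      = ∑ k ∈ Icc 1 n, G (k : ZMod q) := by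
    rw [← Finset.sum_filter_add_sum_filter_not (Icc 1 n) (fun k => q ∣ k)]
    have hzero : ∑ k ∈ (Icc 1 n).filter (fun k => q ∣ k), G (k : ZMod q) = 0 := by
      apply Finset.sum_eq_zero
      intro k hk
      have hd : q ∣ k := (Finset.mem_filter.mp hk).2
      have : ((k : ZMod q)) = 0 := (ZMod.natCast_eq_zero_iff k q).mpr hd
      simp [hGdef, this]
    rw [hzero, zero_add]
  have hb : ∀ x : ZMod q, |G x| ≤ 1 := by
    intro x
    by_cases hx : x = 0
    · simp [hGdef, hx]
    · simp only [hGdef, if_neg hx]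
      exact Real.abs_cos_le_one _
  have hW : |∑ k ∈ Icc 1 n, G (k : ZMod q)| ≤ (q:ℝ) - 1 :=
    aux_periodic_sum_bound q n G (aux_sum_g p q hpq) hb
  set W := ∑ k ∈ (Icc 1 n).filter (fun k => ¬ q ∣ k), G (k : ZMod q) with hWdef
  have hWabs : |W| ≤ (q:ℝ) - 1 := by rw [hWfull]; exact hW
  have hεW : π * ε * W ≥ -(π * |ε| * ((q:ℝ) - 1)) := by
    have h1 : |π * ε * W| ≤ π * |ε| * ((q:ℝ)-1) := by
      rw [abs_mul, abs_mul, abs_of_pos hπ]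
      apply mul_le_mul_of_nonneg_left hWabs (by positivity)
    linarith [neg_abs_le (π * ε * W)]
  -- the quadratic term
  have hquad : ∑ k ∈ Icc 1 n, 2 * π ^ 2 * (k:ℝ) * ε ^ 2 ≤ 2 * π ^ 2 * (n:ℝ) ^ 2 * ε ^ 2 := by
    calc ∑ k ∈ Icc 1 n, 2 * π ^ 2 * (k:ℝ) * ε ^ 2
        ≤ ∑ k ∈ Icc 1 n, 2 * π ^ 2 * (n:ℝ) * ε ^ 2 := by
          apply Finset.sum_le_sum
          intro k hk
          have hkn : (k:ℝ) ≤ n := by exact_mod_cast (Finset.mem_Icc.mp hk).2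
          nlinarith [mul_nonneg (mul_nonneg (mul_nonneg (by norm_num : (0:ℝ) ≤ 2) (sq_nonneg π))
            (sub_nonneg.mpr hkn)) (sq_nonneg ε)]
      _ = (Icc 1 n).card * (2 * π ^ 2 * (n:ℝ) * ε ^ 2) := by rw [Finset.sum_const, nsmul_eq_mul]
      _ ≤ (n:ℝ) * (2 * π ^ 2 * (n:ℝ) * ε ^ 2) := by
          apply mul_le_mul_of_nonneg_right _ (by positivity)
          rw [Nat.card_Icc]
          simp
      _ = 2 * π ^ 2 * (n:ℝ) ^ 2 * ε ^ 2 := by ring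
  rw [hsplit]
  have hmain : π * |ε| ≤ (↑(n / q) : ℝ) * (π * |ε|) + π * ε * W := by
    have h1 : π * |ε| * ((↑(n / q) : ℝ) - (q:ℝ) + 1) ≥ π * |ε| * 1 := by
      apply mul_le_mul_of_nonneg_left _ (by positivity)
      linarith
    nlinarith [mul_nonneg hπ.le (abs_nonneg ε)]
  linarith

/-! Provided definition and the main theorem -/

theorem stmt_14 (p : ℤ) (q : ℕ) (hq : 1 ≤ q) (hpq : Int.gcd p q = 1)
    (n : ℕ) (hn : q ^ 2 ≤ n) :
    ∃ δ > 0, ∃ c > 0, ∃ C : ℝ,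
      (∀ ε : ℝ, |ε| < δ →
        f n ((p : ℝ) / q + ε) - f n ((p : ℝ) / q) ≥ c * |ε| - C * ε ^ 2) ∧
      ∃ δ' > 0, ∀ ε : ℝ, |ε| < δ' →
        f n ((p : ℝ) / q + ε) - f n ((p : ℝ) / q) ≥ (c / 2) * |ε| := by
  have hπ := Real.pi_pos
  have hn1 : 1 ≤ n := le_trans (Nat.one_le_iff_ne_zero.mpr (by positivity)) hn
  have hnR : (1:ℝ) ≤ n := by exact_mod_cast hn1
  set δ : ℝ := 1 / ((n:ℝ) * π + 1) with hδdef
  have hδpos : 0 < δ := by positivity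
  set C : ℝ := 2 * π ^ 2 * (n:ℝ) ^ 2 with hCdef
  have hCpos : 0 < C := by positivity
  have hkey : ∀ ε : ℝ, |ε| < δ →
      f n ((p : ℝ) / q + ε) - f n ((p : ℝ) / q) ≥ π * |ε| - C * ε ^ 2 := by
    intro ε hε
    apply aux_main_est p q hq hpq n hn
    have h1 : (n:ℝ) * π * |ε| ≤ (n:ℝ) * π * δ := by
      apply mul_le_mul_of_nonneg_left hε.le (by positivity)
    have h2 : (n:ℝ) * π * δ ≤ 1 := by
      rw [hδdef]
      rw [mul_one_div, div_le_one (by positivity)]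
      linarith
    linarith
  refine ⟨δ, hδpos, π, hπ, C, hkey, min δ (π / (2 * C)), lt_min hδpos (by positivity), ?_⟩
  intro ε hε
  have hε1 : |ε| < δ := lt_of_lt_of_le hε (min_le_left _ _)
  have hε2 : |ε| ≤ π / (2 * C) := le_of_lt (lt_of_lt_of_le hε (min_le_right _ _))
  have h := hkey ε hε1
  have hC2 : C * ε ^ 2 ≤ (π / 2) * |ε| := by
    have h3 : C * |ε| ≤ π / 2 := by
      rw [le_div_iff₀ (by positivity : (0:ℝ) < 2 * C)] at hε2
      linarith
    have h4 : ε ^ 2 = |ε| * |ε| := by rw [← sq_abs]; ring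
    nlinarith [abs_nonneg ε]
  linarith
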